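/- Let F : ℝ → ℝ be three times continuously differentiable with F(x*) = 0 and F′(x*) ≠ 0. Define the iteration y_k = x_k − F′(x_k)^{−1} F(x_k), x_{k+1} = y_k − F′(x_k)^{−1} F(y_k). Then there exist a neighborhood U of x* and a constant C > 0 such that for x_k ∈ U, |x_{k+1} − x*| ≤ C |x_k − x*|³. -/

import Mathlib

open Set Metric

/-- Points of a segment in ℝ are within `|b - a|` of both endpoints. -/
lemma seg_dist_bound {a b t : ℝ} (ht : t ∈ segment ℝ a b) :
    |t - a| ≤ |b - a| ∧ |t - b| ≤ |b - a| := by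
  obtain ⟨p, q, hp, hq, hpq, rfl⟩ := ht
  have hpq' : p = 1 - q := by linarith
  have h1 : p • a + q • b - a = q * (b - a) := by
    simp only [smul_eq_mul, hpq']; ring
  have h2 : p • a + q • b - b = p * (a - b) := by
    have hq' : q = 1 - p := by linarith
    simp only [smul_eq_mul, hq']; ring
  constructor
  · rw [h1, abs_mul]
    have : |q| = q := abs_of_nonneg hq
    nlinarith [abs_nonneg (b - a)]
  · rw [h2, abs_mul, abs_sub_comm a b]
    have : |p| = p := abs_of_nonneg hp
    nlinarith [abs_nonneg (b - a)]

/-- Taylor-type estimate: if the deviation of `deriv f` from `deriv f c` is bounded by `K`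
on the segment from `a` to `b`, then `|f b - f a - f'(c)(b-a)| ≤ K |b - a|`. -/
lemma taylor_bound (f : ℝ → ℝ) (hf : Differentiable ℝ f) {a b c K : ℝ}
    (hK : ∀ t ∈ segment ℝ a b, |deriv f t - deriv f c| ≤ K) :
    |f b - f a - deriv f c * (b - a)| ≤ K * |b - a| := by
  have key := Convex.norm_image_sub_le_of_norm_hasDerivWithin_le
    (f := fun t => f t - deriv f c * t) (f' := fun t => deriv f t - deriv f c)
    (s := segment ℝ a b) (C := K)
    (fun t _ => by
      have h := (hf t).hasDerivAt.sub ((hasDerivAt_id' t).const_mul (deriv f c))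
      rw [mul_one] at h; exact h.hasDerivWithinAt)
    (fun t ht => by simpa using hK t ht) (convex_segment a b)
    (left_mem_segment ℝ a b) (right_mem_segment ℝ a b)
  simp only [Real.norm_eq_abs] at key
  calc |f b - f a - deriv f c * (b - a)|
      = |(f b - deriv f c * b) - (f a - deriv f c * a)| := by ring_nf
    _ ≤ K * |b - a| := key

theorem two_step_newton_cubic_convergence (F : ℝ → ℝ) (xs : ℝ)
    (hF : ContDiff ℝ 3 F) (hroot : F xs = 0) (hF' : deriv F xs ≠ 0) :
    ∃ U ∈ nhds xs, ∃ C > 0, ∀ x ∈ U,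
      let y := x - (deriv F x)⁻¹ * F x
      let x' := y - (deriv F x)⁻¹ * F y
      |x' - xs| ≤ C * |x - xs| ^ 3 := by
  -- smoothness facts
  have hFd : Differentiable ℝ F := hF.differentiable (by norm_num)
  have hF2 : ContDiff ℝ 2 (deriv F) := by
    have : ContDiff ℝ (2 + 1) F := by exact_mod_cast hF
    exact (contDiff_succ_iff_deriv.mp this).2.2
  have hF1d : Differentiable ℝ (deriv F) := hF2.differentiable (by norm_num)
  have hF2c : Continuous (deriv (deriv F)) := hF2.continuous_deriv (by norm_num)
  -- bound on the second derivative on a ball of radius 1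
  obtain ⟨L0, hL0⟩ := (isCompact_closedBall xs 1).exists_bound_of_continuousOn
    hF2c.continuousOn
  set L : ℝ := max L0 1 with hLdef
  have hL1 : (1 : ℝ) ≤ L := le_max_right _ _
  have hLpos : 0 < L := lt_of_lt_of_le one_pos hL1
  have hLbound : ∀ t ∈ closedBall xs 1, |deriv (deriv F) t| ≤ L :=
    fun t ht => le_trans (hL0 t ht) (le_max_left _ _)
  -- lower bound on |F'| near xs
  set m : ℝ := |deriv F xs| / 2 with hmdef
  have hmpos : 0 < m := by positivity
  have hcont : ContinuousAt (deriv F) xs := hF1d.continuous.continuousAt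
  obtain ⟨r1, hr1pos, hr1⟩ := Metric.continuousAt_iff.mp hcont m hmpos
  -- choose the radius
  set r : ℝ := min (r1 / 2) (min 1 (m / L)) with hrdef
  have hrpos : 0 < r := by
    apply lt_min (by positivity) (lt_min one_pos (by positivity))
  have hr_r1 : r ≤ r1 / 2 := min_le_left _ _
  have hr_1 : r ≤ 1 := le_trans (min_le_right _ _) (min_le_left _ _)
  have hr_mL : r ≤ m / L := le_trans (min_le_right _ _) (min_le_right _ _)
  have hrL : L * r ≤ m := by
    have := (le_div_iff₀ hLpos).mp hr_mL
    nlinarith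
  -- lower bound |F' x| ≥ m on closedBall xs r
  have hlow : ∀ t ∈ closedBall xs r, m ≤ |deriv F t| := by
    intro t ht
    have hd : dist t xs < r1 := by
      have := mem_closedBall.mp ht
      linarith [hr1pos]
    have := hr1 hd
    rw [Real.dist_eq] at this
    have h2 : |deriv F xs| - |deriv F t| ≤ |deriv F t - deriv F xs| := by
      rw [abs_sub_comm]; exact abs_sub_abs_le_abs_sub _ _
    rw [hmdef]; linarith
  -- Lipschitz bound for F' on closedBall xs r
  have hLip : ∀ s ∈ closedBall xs r, ∀ t ∈ closedBall xs r,
      |deriv F t - deriv F s| ≤ L * |t - s| := by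
    intro s hs t ht
    have hsub : closedBall xs r ⊆ closedBall xs 1 := closedBall_subset_closedBall hr_1
    have key := Convex.norm_image_sub_le_of_norm_hasDerivWithin_le
      (f := deriv F) (f' := deriv (deriv F)) (s := closedBall xs 1) (C := L)
      (fun u _ => (hF1d u).hasDerivAt.hasDerivWithinAt)
      (fun u hu => hLbound u hu) (convex_closedBall xs 1) (hsub hs) (hsub ht)
    simpa using key
  refine ⟨ball xs r, ball_mem_nhds xs hrpos, 2 * L ^ 2 / m ^ 2, by positivity, ?_⟩
  intro x hx
  intro y x'
  set e : ℝ := x - xs with hedef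
  have hxball : x ∈ closedBall xs r := ball_subset_closedBall hx
  have hxe : |e| ≤ r := by
    rw [hedef, ← Real.dist_eq]; exact mem_closedBall.mp hxball
  have hmx : m ≤ |deriv F x| := hlow x hxball
  have hFx0 : deriv F x ≠ 0 := by
    intro h; rw [h, abs_zero] at hmx; linarith
  -- segment from xs to x lies in the ball
  have hseg1 : ∀ t ∈ segment ℝ xs x, t ∈ closedBall xs r := by
    intro t ht
    have := (seg_dist_bound ht).1
    rw [mem_closedBall, Real.dist_eq]
    exact le_trans this hxe
  -- first Taylor estimate
  have hT1 : |F x - F xs - deriv F x * (x - xs)| ≤ L * |e| * |x - xs| := by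
    apply taylor_bound F hFd
    intro t ht
    have h1 := hLip x hxball t (hseg1 t ht)
    have h2 := (seg_dist_bound ht).2
    calc |deriv F t - deriv F x| ≤ L * |t - x| := h1
      _ ≤ L * |e| := by
          apply mul_le_mul_of_nonneg_left _ (le_of_lt hLpos)
          rw [hedef]; exact h2
  -- bound for |y - xs|
  have hyxs : y - xs = (deriv F x)⁻¹ * (deriv F x * (x - xs) - (F x - F xs)) := by
    rw [mul_sub, ← mul_assoc, inv_mul_cancel₀ hFx0, one_mul, hroot]
    show x - (deriv F x)⁻¹ * F x - xs = _
    ring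
  have hy_bound : |y - xs| ≤ L / m * |e| ^ 2 := by
    rw [hyxs, abs_mul, abs_inv]
    have h1 : |deriv F x * (x - xs) - (F x - F xs)| ≤ L * |e| * |e| := by
      rw [abs_sub_comm]; rw [hedef] at hT1 ⊢; exact hT1
    have h2 : |deriv F x|⁻¹ ≤ m⁻¹ := by
      apply inv_anti₀ hmpos hmx
    calc |deriv F x|⁻¹ * |deriv F x * (x - xs) - (F x - F xs)|
        ≤ m⁻¹ * (L * |e| * |e|) := by
          apply mul_le_mul h2 h1 (abs_nonneg _) (by positivity)
      _ = L / m * |e| ^ 2 := by ring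
  have hy_le_e : |y - xs| ≤ |e| := by
    have : L / m * |e| ^ 2 ≤ |e| := by
      rw [div_mul_eq_mul_div, div_le_iff₀ hmpos]
      have : L * |e| ≤ m := by nlinarith [abs_nonneg e]
      nlinarith [abs_nonneg e]
    linarith [hy_bound]
  have hyball : y ∈ closedBall xs r := by
    rw [mem_closedBall, Real.dist_eq]
    exact le_trans hy_le_e hxe
  -- segment from xs to y lies in the ball
  have hseg2 : ∀ t ∈ segment ℝ xs y, t ∈ closedBall xs r := by
    intro t ht
    have := (seg_dist_bound ht).1
    rw [mem_closedBall, Real.dist_eq]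
    exact le_trans (le_trans this hy_le_e) hxe
  -- second Taylor estimate
  have hT2 : |F y - F xs - deriv F x * (y - xs)| ≤ 2 * L * |e| * |y - xs| := by
    apply taylor_bound F hFd
    intro t ht
    have h1 := hLip x hxball t (hseg2 t ht)
    have h2 := (seg_dist_bound ht).1
    calc |deriv F t - deriv F x| ≤ L * |t - x| := h1
      _ ≤ 2 * L * |e| := by
          have htx : |t - x| ≤ 2 * |e| := by
            have : |t - x| ≤ |t - xs| + |xs - x| := abs_sub_le t xs x
            have hxsx : |xs - x| = |e| := by rw [hedef, abs_sub_comm]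
            have hty : |t - xs| ≤ |e| := le_trans h2 hy_le_e
            linarith
          nlinarith [abs_nonneg (t - x)]
  -- conclude
  have hx'xs : x' - xs = (deriv F x)⁻¹ * (deriv F x * (y - xs) - (F y - F xs)) := by
    rw [mul_sub, ← mul_assoc, inv_mul_cancel₀ hFx0, one_mul, hroot]
    show y - (deriv F x)⁻¹ * F y - xs = _
    ring
  rw [hx'xs, abs_mul, abs_inv]
  have h1 : |deriv F x * (y - xs) - (F y - F xs)| ≤ 2 * L * |e| * |y - xs| := by
    rw [abs_sub_comm]; exact hT2
  have h2 : |deriv F x|⁻¹ ≤ m⁻¹ := inv_anti₀ hmpos hmx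
  calc |deriv F x|⁻¹ * |deriv F x * (y - xs) - (F y - F xs)|
      ≤ m⁻¹ * (2 * L * |e| * |y - xs|) := by
        apply mul_le_mul h2 h1 (abs_nonneg _) (by positivity)
    _ ≤ m⁻¹ * (2 * L * |e| * (L / m * |e| ^ 2)) := by
        apply mul_le_mul_of_nonneg_left _ (by positivity)
        apply mul_le_mul_of_nonneg_left hy_bound (by positivity)
    _ = 2 * L ^ 2 / m ^ 2 * |e| ^ 3 := by
        ring
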